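/- The expected LIS length of a uniformly random permutation satisfies limsup_{n→∞} E[L(σ_n)]/√n ≤ e. -/
import Mathlib


/-- Length of the longest strictly increasing subsequence of the sequence `a`. -/
noncomputable def lisLen {n : ℕ} {α : Type*} [LinearOrder α] (a : Fin n → α) : ℕ :=
  sSup {k | ∃ f : Fin k → Fin n, StrictMono f ∧ StrictMono (a ∘ f)}

open Filter

private lemma lis_zero_mem {n : ℕ} {α : Type*} [LinearOrder α] (a : Fin n → α) :
    0 ∈ {k | ∃ f : Fin k → Fin n, StrictMono f ∧ StrictMono (a ∘ f)} := by
  refine ⟨Fin.elim0, ?_, ?_⟩ <;> · intro i; exact i.elim0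

private lemma lis_bdd {n : ℕ} {α : Type*} [LinearOrder α] (a : Fin n → α) :
    ∀ m ∈ {k | ∃ f : Fin k → Fin n, StrictMono f ∧ StrictMono (a ∘ f)}, m ≤ n := by
  rintro m ⟨f, hf, -⟩
  simpa using Fintype.card_le_of_injective f hf.injective

private lemma lisLen_le {n : ℕ} {α : Type*} [LinearOrder α] (a : Fin n → α) :
    lisLen a ≤ n :=
  csSup_le ⟨0, lis_zero_mem a⟩ (lis_bdd a)

private lemma exists_lis_witness {n k : ℕ} {α : Type*} [LinearOrder α] (a : Fin n → α)
    (hk : k ≤ lisLen a) :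
    ∃ f : Fin k → Fin n, StrictMono f ∧ StrictMono (a ∘ f) := by
  have hmem : lisLen a ∈ {k | ∃ f : Fin k → Fin n, StrictMono f ∧ StrictMono (a ∘ f)} :=
    Nat.sSup_mem ⟨0, lis_zero_mem a⟩ ⟨n, lis_bdd a⟩
  obtain ⟨F, hF1, hF2⟩ := hmem
  exact ⟨F ∘ Fin.castLE hk, hF1.comp (Fin.strictMono_castLE hk),
    hF2.comp (Fin.strictMono_castLE hk)⟩

open Finset

private def permRestrict {n k : ℕ} (f g : Fin k → Fin n)
    (σ : {σ : Equiv.Perm (Fin n) // ∀ i, σ (f i) = g i}) :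
    ((↥(Set.range f)ᶜ) ↪ (↥(Set.range g)ᶜ)) :=
  ⟨fun x => ⟨σ.1 x.1, by
      rintro ⟨i, hi⟩
      exact x.2 ⟨i, σ.1.injective ((σ.2 i).trans hi)⟩⟩,
    fun x y hxy => Subtype.ext (σ.1.injective (congrArg Subtype.val hxy))⟩

private lemma card_fixed_comp_le {n k : ℕ} {f g : Fin k → Fin n}
    (hf : Function.Injective f) (hg : Function.Injective g) :
    Fintype.card {σ : Equiv.Perm (Fin n) // ∀ i, σ (f i) = g i} ≤ (n - k).factorial := by
  classical
  have hΦ : Function.Injective (permRestrict f g) := by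
    intro σ τ h
    ext x
    by_cases hx : x ∈ Set.range f
    · obtain ⟨i, rfl⟩ := hx
      rw [σ.2 i, τ.2 i]
    · have h2 := congrArg (fun e => ((e ⟨x, hx⟩ : ↥(Set.range g)ᶜ) : Fin n)) h
      simp only [permRestrict] at h2
      exact congrArg Fin.val h2
  calc Fintype.card {σ : Equiv.Perm (Fin n) // ∀ i, σ (f i) = g i}
      ≤ Fintype.card ((↥(Set.range f)ᶜ) ↪ (↥(Set.range g)ᶜ)) :=
        Fintype.card_le_of_injective _ hΦ
    _ = (n - k).factorial := by
        rw [Fintype.card_embedding_eq]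
        have h1 : Fintype.card ↥(Set.range f)ᶜ = n - k := by
          rw [Fintype.card_compl_set, Set.card_range_of_injective hf]
          simp
        have h2 : Fintype.card ↥(Set.range g)ᶜ = n - k := by
          rw [Fintype.card_compl_set, Set.card_range_of_injective hg]
          simp
        rw [h1, h2, Nat.descFactorial_self]

private lemma card_strictMono_le (n k : ℕ) :
    Fintype.card {f : Fin k → Fin n // StrictMono f} ≤ n.choose k := by
  classical
  have key : Fintype.card {s : Finset (Fin n) // s.card = k} = n.choose k := by
    rw [Fintype.card_subtype]
    have : (univ.filter fun s : Finset (Fin n) => s.card = k) = powersetCard k univ := by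
      ext s
      simp [Finset.mem_powersetCard_univ, eq_comm]
    rw [this, Finset.card_powersetCard]
    simp
  rw [← key]
  apply Fintype.card_le_of_injective
    (fun f => (⟨Finset.image f.1 univ, by
      rw [Finset.card_image_of_injective _ f.2.injective]; simp⟩ :
      {s : Finset (Fin n) // s.card = k}))
  intro f g h
  have hs := congrArg Subtype.val h
  simp only at hs
  have hcard : (Finset.image f.1 univ).card = k := by
    rw [Finset.card_image_of_injective _ f.2.injective]; simp
  have hf' : f.1 = (Finset.image f.1 univ).orderEmbOfFin hcard :=
    Finset.orderEmbOfFin_unique hcard (fun x => Finset.mem_image_of_mem _ (mem_univ x)) f.2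
  have hg' : g.1 = (Finset.image f.1 univ).orderEmbOfFin hcard := by
    refine Finset.orderEmbOfFin_unique hcard (fun x => ?_) g.2
    rw [hs]; exact Finset.mem_image_of_mem _ (mem_univ x)
  exact Subtype.ext (hf'.trans hg'.symm)

private lemma count_ge_le (n k : ℕ) :
    (Finset.univ.filter
        (fun σ : Equiv.Perm (Fin n) => k ≤ lisLen (fun i => σ i))).card
      ≤ n.choose k * n.choose k * (n - k).factorial := by
  classical
  set P : Finset ((Fin k → Fin n) × (Fin k → Fin n)) :=
    Finset.univ.filter (fun p => StrictMono p.1 ∧ StrictMono p.2) with hP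
  have hsub : (Finset.univ.filter
        (fun σ : Equiv.Perm (Fin n) => k ≤ lisLen (fun i => σ i)))
      ⊆ P.biUnion (fun p => Finset.univ.filter (fun σ => ∀ i, σ (p.1 i) = p.2 i)) := by
    intro σ hσ
    simp only [Finset.mem_filter, Finset.mem_univ, true_and] at hσ
    obtain ⟨f, hf, hmono⟩ := exists_lis_witness _ hσ
    refine Finset.mem_biUnion.2 ⟨(f, fun i => σ (f i)), ?_, ?_⟩
    · simp only [hP, Finset.mem_filter, Finset.mem_univ, true_and]
      exact ⟨hf, hmono⟩
    · simp
  have hP_card : P.card ≤ n.choose k * n.choose k := by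
    have h1 : P ⊆ (Finset.univ.filter fun f : Fin k → Fin n => StrictMono f) ×ˢ
        (Finset.univ.filter fun f : Fin k → Fin n => StrictMono f) := by
      intro p hp
      simp only [hP, Finset.mem_filter, Finset.mem_univ, true_and] at hp
      simp [Finset.mem_product, hp.1, hp.2]
    have h2 : (Finset.univ.filter fun f : Fin k → Fin n => StrictMono f).card ≤ n.choose k := by
      rw [← Fintype.card_subtype]
      exact card_strictMono_le n k
    calc P.card ≤ _ := Finset.card_le_card h1
      _ = _ * _ := Finset.card_product _ _
      _ ≤ n.choose k * n.choose k := Nat.mul_le_mul h2 h2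
  refine le_trans (le_trans (Finset.card_le_card hsub) Finset.card_biUnion_le) ?_
  calc ∑ p ∈ P, (Finset.univ.filter
          (fun σ : Equiv.Perm (Fin n) => ∀ i, σ (p.1 i) = p.2 i)).card
      ≤ ∑ _p ∈ P, (n - k).factorial := by
        refine Finset.sum_le_sum fun p hp => ?_
        simp only [hP, Finset.mem_filter, Finset.mem_univ, true_and] at hp
        rw [← Fintype.card_subtype]
        exact card_fixed_comp_le hp.1.injective hp.2.injective
    _ = P.card * (n - k).factorial := by rw [Finset.sum_const, smul_eq_mul]
    _ ≤ n.choose k * n.choose k * (n - k).factorial :=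
        Nat.mul_le_mul_right _ hP_card

private lemma sum_lis_bound (n k : ℕ) (hk1 : 1 ≤ k) :
    (∑ σ : Equiv.Perm (Fin n), lisLen (fun i => σ i))
      ≤ (k - 1) * n.factorial + n * (n.choose k * n.choose k * (n - k).factorial) := by
  classical
  have hle : ∀ σ : Equiv.Perm (Fin n), lisLen (fun i => σ i) ≤
      (k - 1) + (if k ≤ lisLen (fun i => σ i) then n else 0) := by
    intro σ
    by_cases h : k ≤ lisLen (fun i => σ i)
    · have := lisLen_le (fun i => σ i)
      simp only [h, if_true]
      omega
    · simp only [h, if_false]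
      omega
  calc (∑ σ : Equiv.Perm (Fin n), lisLen (fun i => σ i))
      ≤ ∑ σ : Equiv.Perm (Fin n),
          ((k - 1) + (if k ≤ lisLen (fun i => σ i) then n else 0)) :=
        Finset.sum_le_sum fun σ _ => hle σ
    _ = (k - 1) * n.factorial
        + (Finset.univ.filter
            (fun σ : Equiv.Perm (Fin n) => k ≤ lisLen (fun i => σ i))).card * n := by
        rw [Finset.sum_add_distrib, Finset.sum_const, Finset.sum_ite, Finset.sum_const,
          Finset.sum_const_zero, add_zero, smul_eq_mul, smul_eq_mul, Finset.card_univ,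
          Fintype.card_perm, Fintype.card_fin, mul_comm]
    _ ≤ (k - 1) * n.factorial + n * (n.choose k * n.choose k * (n - k).factorial) := by
        have := count_ge_le n k
        have h2 : (Finset.univ.filter
            (fun σ : Equiv.Perm (Fin n) => k ≤ lisLen (fun i => σ i))).card * n
            ≤ n * (n.choose k * n.choose k * (n - k).factorial) := by
          rw [mul_comm]
          exact Nat.mul_le_mul_left _ this
        omega

set_option maxHeartbeats 1000000 in
private lemma main_bound {n K : ℕ} (hn1 : 1 ≤ n) (hK1 : 1 ≤ K) (hKn : K ≤ n)
    {c' : ℝ} (hc'1 : 1 ≤ c') (hlow : c' * Real.sqrt n ≤ K)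
    (hhigh : (K : ℝ) - 1 ≤ c' * Real.sqrt n) :
    (∑ σ : Equiv.Perm (Fin n), (lisLen (fun i => σ i) : ℝ)) / (Nat.factorial n : ℝ)
        / Real.sqrt n
      ≤ c' + Real.sqrt n * (Real.exp 1 / c') ^ (2 * K) := by
  have hn0 : (0:ℝ) < n := by exact_mod_cast hn1
  have hsq : (0:ℝ) < Real.sqrt n := Real.sqrt_pos.2 hn0
  have hfacpos : (0:ℝ) < (Nat.factorial n : ℝ) := by exact_mod_cast n.factorial_pos
  have hKfacpos : (0:ℝ) < (Nat.factorial K : ℝ) := by exact_mod_cast K.factorial_pos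
  have hKpos : (0:ℝ) < K := by exact_mod_cast hK1
  have hc'0 : (0:ℝ) < c' := lt_of_lt_of_le one_pos hc'1
  have he1 : (0:ℝ) < Real.exp 1 := Real.exp_pos 1
  -- Stirling-type bound : K^K ≤ e^K * K!
  have hstir : (K:ℝ) ^ K ≤ Real.exp K * (Nat.factorial K) := by
    have h1 : (K:ℝ)^K / (Nat.factorial K) ≤ Real.exp K := by
      refine le_trans ?_ (Real.sum_le_exp_of_nonneg (x := (K:ℝ)) (by positivity) (K+1))
      refine Finset.single_le_sum (f := fun i => (K:ℝ)^i / (Nat.factorial i)) ?_ ?_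
      · intro i _; positivity
      · exact Finset.self_mem_range_succ K
    calc (K:ℝ)^K = (K:ℝ)^K / (Nat.factorial K) * (Nat.factorial K) := by field_simp
      _ ≤ Real.exp K * (Nat.factorial K) :=
          mul_le_mul_of_nonneg_right h1 (by positivity)
  set C : ℕ := n.choose K * n.choose K * (n - K).factorial with hC
  -- C / n! = choose / K!
  have hfac : ((n.choose K : ℝ)) * (Nat.factorial K) * (Nat.factorial (n - K))
      = (Nat.factorial n : ℝ) := by
    exact_mod_cast congrArg (Nat.cast (R := ℝ)) (Nat.choose_mul_factorial_mul_factorial hKn)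
  have hCfrac : (C:ℝ)/(Nat.factorial n) = (n.choose K : ℝ)/(Nat.factorial K) := by
    rw [div_eq_div_iff hfacpos.ne' hKfacpos.ne']
    push_cast [hC]
    linear_combination (n.choose K : ℝ) * hfac
  -- choose / K! ≤ n^K / (K! * K!)
  have hcp : (n.choose K : ℝ) / (Nat.factorial K)
      ≤ (n:ℝ)^K / ((Nat.factorial K : ℝ) * (Nat.factorial K)) := by
    rw [← div_div]
    exact div_le_div_of_nonneg_right (Nat.choose_le_pow_div K n) hKfacpos.le
  -- n^K/(K!K!) ≤ n^K e^{2K} / K^{2K}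
  have hkey : (K:ℝ)^(2*K) ≤ (Real.exp 1)^(2*K) * ((Nat.factorial K : ℝ) * (Nat.factorial K)) := by
    have hexp : (Real.exp 1)^(2*K) = Real.exp K * Real.exp K := by
      rw [two_mul, pow_add, Real.exp_one_pow]
    have hKK : (K:ℝ)^(2*K) = (K:ℝ)^K * (K:ℝ)^K := by rw [two_mul, pow_add]
    rw [hexp, hKK]
    have h0 : (0:ℝ) ≤ (K:ℝ)^K := by positivity
    nlinarith [hstir, Real.exp_pos (K:ℝ), hKfacpos]
  have hstep : (n:ℝ)^K / ((Nat.factorial K : ℝ) * (Nat.factorial K))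
      ≤ (n:ℝ)^K * (Real.exp 1)^(2*K) / (K:ℝ)^(2*K) := by
    rw [div_le_div_iff₀ (by positivity) (by positivity)]
    have h0 : (0:ℝ) ≤ (n:ℝ)^K := by positivity
    nlinarith [hkey, h0]
  -- base comparison : √n e / K ≤ e / c'
  have hbase : Real.sqrt n * Real.exp 1 / K ≤ Real.exp 1 / c' := by
    rw [div_le_div_iff₀ hKpos hc'0]
    nlinarith [hlow, he1]
  have hpow : (Real.sqrt n * Real.exp 1 / K)^(2*K) ≤ (Real.exp 1 / c')^(2*K) :=
    pow_le_pow_left₀ (by positivity) hbase _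
  have hrw : (Real.sqrt n * Real.exp 1 / K)^(2*K)
      = (n:ℝ)^K * (Real.exp 1)^(2*K) / (K:ℝ)^(2*K) := by
    rw [div_pow, mul_pow]
    congr 2
    rw [pow_mul, Real.sq_sqrt hn0.le]
  have hCle : (C:ℝ) ≤ (Nat.factorial n : ℝ) * (Real.exp 1 / c')^(2*K) := by
    have h1 : (C:ℝ)/(Nat.factorial n) ≤ (Real.exp 1 / c')^(2*K) := by
      rw [hCfrac]
      calc (n.choose K : ℝ)/(Nat.factorial K)
          ≤ (n:ℝ)^K / ((Nat.factorial K : ℝ) * (Nat.factorial K)) := hcp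
        _ ≤ (n:ℝ)^K * (Real.exp 1)^(2*K) / (K:ℝ)^(2*K) := hstep
        _ = (Real.sqrt n * Real.exp 1 / K)^(2*K) := hrw.symm
        _ ≤ (Real.exp 1 / c')^(2*K) := hpow
    calc (C:ℝ) = (C:ℝ)/(Nat.factorial n) * (Nat.factorial n) := by field_simp
      _ ≤ (Real.exp 1 / c')^(2*K) * (Nat.factorial n) :=
          mul_le_mul_of_nonneg_right h1 hfacpos.le
      _ = (Nat.factorial n : ℝ) * (Real.exp 1 / c')^(2*K) := mul_comm _ _
  -- the counting bound, cast to ℝ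
  have hsum : (∑ σ : Equiv.Perm (Fin n), (lisLen (fun i => σ i) : ℝ))
      ≤ ((K:ℝ) - 1) * (Nat.factorial n) + (n:ℝ) * C := by
    have h := sum_lis_bound n K hK1
    have hcast : ((∑ σ : Equiv.Perm (Fin n), lisLen (fun i => σ i) : ℕ) : ℝ)
        ≤ (((K - 1) * n.factorial + n * C : ℕ) : ℝ) := by exact_mod_cast h
    push_cast [Nat.cast_sub hK1] at hcast
    push_cast
    linarith
  rw [div_div, div_le_iff₀ (by positivity)]
  have h2 : Real.sqrt n * Real.sqrt n = n := Real.mul_self_sqrt hn0.le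
  have expand : (c' + Real.sqrt n * (Real.exp 1 / c')^(2*K))
      * ((Nat.factorial n : ℝ) * Real.sqrt n)
      = c' * (Real.sqrt n * (Nat.factorial n))
        + (Real.sqrt n * Real.sqrt n) * ((Real.exp 1 / c')^(2*K) * (Nat.factorial n)) := by
    ring
  rw [expand, h2]
  have h3 : ((K:ℝ) - 1) * (Nat.factorial n) ≤ (c' * Real.sqrt n) * (Nat.factorial n) :=
    mul_le_mul_of_nonneg_right hhigh hfacpos.le
  have h4 : (n:ℝ) * C ≤ (n:ℝ) * ((Nat.factorial n : ℝ) * (Real.exp 1 / c')^(2*K)) :=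
    mul_le_mul_of_nonneg_left hCle hn0.le
  nlinarith [hsum, h3, h4]

set_option maxHeartbeats 1000000 in
/-- Hammersley's upper bound: `limsup_{n→∞} E[L(σ_n)]/√n ≤ e`. -/
theorem limsup_expected_lis_le_e :
    limsup
      (fun n : ℕ =>
        (∑ σ : Equiv.Perm (Fin n), (lisLen (fun i => σ i) : ℝ)) / (Nat.factorial n : ℝ)
          / Real.sqrt n)
      atTop ≤ Real.exp 1 := by
  have hF0 : ∀ n : ℕ, 0 ≤ (∑ σ : Equiv.Perm (Fin n), (lisLen (fun i => σ i) : ℝ))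
      / (Nat.factorial n : ℝ) / Real.sqrt n := by
    intro n
    apply div_nonneg (div_nonneg ?_ (by positivity)) (Real.sqrt_nonneg _)
    exact Finset.sum_nonneg fun σ _ => Nat.cast_nonneg _
  refine le_of_forall_gt_imp_ge_of_dense fun c hc => ?_
  set c' : ℝ := (Real.exp 1 + c)/2 with hc'def
  have h1e : (1:ℝ) < Real.exp 1 := by nlinarith [Real.add_one_le_exp 1]
  have he : Real.exp 1 < c' := by rw [hc'def]; linarith
  have hcc : c' < c := by rw [hc'def]; linarith
  have hc'1 : (1:ℝ) ≤ c' := by linarith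
  have hc'0 : (0:ℝ) < c' := by linarith
  set q : ℝ := Real.exp 1 / c' with hqdef
  have hq0 : (0:ℝ) ≤ q := by positivity
  have hq1 : q < 1 := (div_lt_one hc'0).2 he
  set k : ℕ → ℕ := fun n => ⌈c' * Real.sqrt n⌉₊ with hkdef
  have hfloor : Tendsto (fun n : ℕ => ⌊Real.sqrt n⌋₊) atTop atTop := by
    refine tendsto_atTop.2 fun b => eventually_atTop.2 ⟨b*b, fun n hn => ?_⟩
    refine Nat.le_floor ?_
    have hbn : ((b*b : ℕ):ℝ) ≤ (n:ℝ) := by exact_mod_cast hn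
    calc (b:ℝ) = Real.sqrt ((b:ℝ)^2) := (Real.sqrt_sq (by positivity)).symm
      _ ≤ Real.sqrt n := Real.sqrt_le_sqrt (by push_cast at hbn ⊢; nlinarith)
  have houter : Tendsto (fun m : ℕ => ((m:ℝ)+1) * q ^ m) atTop (nhds 0) := by
    have h1 := tendsto_self_mul_const_pow_of_lt_one hq0 hq1
    have h2 := tendsto_pow_atTop_nhds_zero_of_lt_one hq0 hq1
    have h3 := h1.add h2
    simpa [add_mul] using h3
  have htend : Tendsto (fun n : ℕ => Real.sqrt n * q ^ (2 * k n)) atTop (nhds 0) := by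
    refine squeeze_zero (g := fun n : ℕ => ((⌊Real.sqrt (n:ℝ)⌋₊ : ℝ)+1) * q ^ ⌊Real.sqrt (n:ℝ)⌋₊)
      (fun n => by positivity) ?_ (houter.comp hfloor)
    intro n
    have hfl : Real.sqrt n ≤ (⌊Real.sqrt n⌋₊ : ℝ) + 1 := (Nat.lt_floor_add_one _).le
    have hexp : ⌊Real.sqrt n⌋₊ ≤ 2 * k n := by
      have h1 : (⌊Real.sqrt n⌋₊ : ℝ) ≤ c' * Real.sqrt n := by
        refine le_trans (Nat.floor_le (Real.sqrt_nonneg _)) ?_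
        nlinarith [Real.sqrt_nonneg (n:ℝ)]
      have h2 : c' * Real.sqrt n ≤ (k n : ℝ) := Nat.le_ceil _
      have h3 : ⌊Real.sqrt n⌋₊ ≤ k n := by exact_mod_cast h1.trans h2
      omega
    exact mul_le_mul hfl (pow_le_pow_of_le_one hq0 hq1.le hexp) (by positivity) (by positivity)
  have hev2 : ∀ᶠ n : ℕ in atTop, Real.sqrt n * q ^ (2 * k n) < c - c' :=
    htend.eventually_lt_const (by linarith)
  have hev1 : ∀ᶠ n : ℕ in atTop,
      (∑ σ : Equiv.Perm (Fin n), (lisLen (fun i => σ i) : ℝ)) / (Nat.factorial n : ℝ)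
        / Real.sqrt n ≤ c' + Real.sqrt n * q ^ (2 * k n) := by
    refine eventually_atTop.2 ⟨⌈(2*c')^2⌉₊ + 2, fun n hn => ?_⟩
    have hn2 : 2 ≤ n := by omega
    have hn1 : 1 ≤ n := by omega
    have hnn : (0:ℝ) < n := by exact_mod_cast hn1
    have hs : 2 * c' ≤ Real.sqrt n := by
      have h1 : ((2*c')^2 : ℝ) ≤ n := by
        calc ((2*c')^2:ℝ) ≤ (⌈(2*c')^2⌉₊ : ℝ) := Nat.le_ceil _
          _ ≤ n := by exact_mod_cast le_trans (by omega) hn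
      calc (2*c') = Real.sqrt ((2*c')^2) := (Real.sqrt_sq (by positivity)).symm
        _ ≤ Real.sqrt n := Real.sqrt_le_sqrt h1
    have hsq0 : 0 < Real.sqrt n := Real.sqrt_pos.2 hnn
    have hK1 : 1 ≤ k n := Nat.ceil_pos.2 (by positivity)
    have hlow : c' * Real.sqrt n ≤ (k n : ℝ) := Nat.le_ceil _
    have hhigh : (k n : ℝ) - 1 ≤ c' * Real.sqrt n := by
      have h := Nat.ceil_lt_add_one (a := c' * Real.sqrt n) (by positivity)
      have : (k n : ℝ) < c' * Real.sqrt n + 1 := h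
      linarith
    have hKn : k n ≤ n := by
      have h2 : c' ≤ Real.sqrt n / 2 := by linarith
      have hsn : Real.sqrt n * Real.sqrt n = n := Real.mul_self_sqrt hnn.le
      have hle : (k n : ℝ) ≤ (n : ℝ) := by
        have h2n : (2:ℝ) ≤ n := by exact_mod_cast hn2
        nlinarith [hhigh, Real.sqrt_nonneg (n:ℝ),
          mul_le_mul_of_nonneg_right h2 (Real.sqrt_nonneg (n:ℝ))]
      exact_mod_cast hle
    exact main_bound hn1 hK1 hKn hc'1 hlow hhigh
  have hev : ∀ᶠ n : ℕ in atTop,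
      (∑ σ : Equiv.Perm (Fin n), (lisLen (fun i => σ i) : ℝ)) / (Nat.factorial n : ℝ)
        / Real.sqrt n ≤ c := by
    filter_upwards [hev1, hev2] with n h1 h2
    linarith
  exact limsup_le_of_le (Filter.isCoboundedUnder_le_of_le atTop (x := 0) fun n => hF0 n) hev
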